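/- Let d be an odd prime and ω : ℂ a primitive d-th root of unity. Define in Matrix (ZMod d) (ZMod d) ℂ the shift matrix X (|k⟩ ↦ |k+1⟩), the diagonal matrix Z with entries ω^k, the diagonal matrix P with entries ω^(2⁻¹·k·(k−1)), the Fourier matrix H with entries H j k = d^(−1/2)·ω^(−j·k), and P̃ = Hᴴ · P · H. Then P̃ · X · P̃ᴴ = X and P̃ · Z · P̃ᴴ = Z · X⁻¹; i.e., P̃ maps generalized Pauli operators to generalized Pauli operators under conjugation and hence is a generalized Clifford operation. -/
import Mathlib


open scoped Matrix

/-- The generalized Pauli shift matrix `X : |k⟩ ↦ |k+1⟩`. -/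
noncomputable def pauliX (d : ℕ) : Matrix (ZMod d) (ZMod d) ℂ :=
  Matrix.of fun j k => if j = k + 1 then 1 else 0

/-- The generalized Pauli `Z`, diagonal with entries `ω^k`. -/
noncomputable def pauliZ (d : ℕ) (ω : ℂ) : Matrix (ZMod d) (ZMod d) ℂ :=
  Matrix.diagonal fun k => ω ^ k.val

/-- The phase gate `P`, diagonal with entries `ω^(2⁻¹·k·(k-1))`. -/
noncomputable def phaseGate (d : ℕ) (ω : ℂ) : Matrix (ZMod d) (ZMod d) ℂ :=
  Matrix.diagonal fun k => ω ^ ((2 : ZMod d)⁻¹ * k * (k - 1)).val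

/-- The qudit Fourier matrix `H j k = d^(-1/2) · ω^(-j·k)`. -/
noncomputable def qFourier (d : ℕ) (ω : ℂ) : Matrix (ZMod d) (ZMod d) ℂ :=
  Matrix.of fun j k => (((d : ℝ) ^ (-(1 : ℝ) / 2) : ℝ) : ℂ) * ω ^ (-(j * k)).val

section aux
variable {d : ℕ} [NeZero d] {ω : ℂ} (hω : IsPrimitiveRoot ω d)
include hω

lemma pow_mod' (n : ℕ) : ω ^ n = ω ^ (n % d) := by
  conv_lhs => rw [← Nat.mod_add_div n d]
  rw [pow_add, pow_mul, hω.pow_eq_one, one_pow, mul_one]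

lemma epow (a b : ZMod d) : ω ^ a.val * ω ^ b.val = ω ^ (a + b).val := by
  rw [← pow_add, ZMod.val_add, ← pow_mod' hω]

lemma enorm (a : ZMod d) : ‖ω ^ a.val‖ = 1 := by
  have h : (ω ^ a.val) ^ d = 1 := by
    rw [← pow_mul, mul_comm, pow_mul, hω.pow_eq_one, one_pow]
  exact Complex.norm_eq_one_of_pow_eq_one h (NeZero.ne d)

lemma emul_neg (a : ZMod d) : ω ^ a.val * ω ^ (-a).val = 1 := by
  rw [epow hω]; simp

lemma econj (a : ZMod d) : (starRingEnd ℂ) (ω ^ a.val) = ω ^ (-a).val := by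
  rw [← Complex.inv_eq_conj (enorm hω a)]
  exact inv_eq_of_mul_eq_one_right (emul_neg hω a)

omit hω in
lemma esum_zmod : ∑ b : ZMod d, ω ^ b.val = ∑ i ∈ Finset.range d, ω ^ i := by
  refine Finset.sum_bij' (fun b _ => b.val) (fun i _ => (i : ZMod d)) ?_ ?_ ?_ ?_ ?_
  · intro a _; exact Finset.mem_range.2 a.val_lt
  · intro i _; exact Finset.mem_univ _
  · intro a _; simp [ZMod.natCast_val, ZMod.cast_id]
  · intro i hi; exact ZMod.val_cast_of_lt (Finset.mem_range.1 hi)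
  · intro a _; rfl

lemma esum (hd : Nat.Prime d) (c : ZMod d) :
    ∑ b : ZMod d, ω ^ (b * c).val = if c = 0 then (d : ℂ) else 0 := by
  haveI := Fact.mk hd
  split_ifs with h
  · simp [h, Finset.card_univ, ZMod.card]
  · have h1 : ∑ b : ZMod d, ω ^ (b * c).val = ∑ b : ZMod d, ω ^ b.val :=
      Fintype.sum_bijective (fun b : ZMod d => b * c) (mulRight_bijective₀ c h)
        _ _ (fun b => rfl)
    rw [h1, esum_zmod, hω.geom_sum_eq_zero hd.one_lt]

omit hω in
lemma X_mul (M : Matrix (ZMod d) (ZMod d) ℂ) (j k : ZMod d) :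
    (pauliX d * M) j k = M (j - 1) k := by
  rw [Matrix.mul_apply, Finset.sum_eq_single (j - 1)]
  · simp [pauliX]
  · intro b _ hb
    simp only [pauliX, Matrix.of_apply, ite_mul, one_mul, zero_mul]
    exact if_neg (fun h => hb (by rw [h]; ring))
  · intro h; exact absurd (Finset.mem_univ _) h

omit hω in
lemma mul_X (M : Matrix (ZMod d) (ZMod d) ℂ) (j k : ZMod d) :
    (M * pauliX d) j k = M j (k + 1) := by
  rw [Matrix.mul_apply, Finset.sum_eq_single (k + 1)]
  · simp [pauliX]
  · intro b _ hb
    simp only [pauliX, Matrix.of_apply, mul_ite, mul_one, mul_zero]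
    exact if_neg hb
  · intro h; exact absurd (Finset.mem_univ _) h

omit hω in
lemma mul_Xt (M : Matrix (ZMod d) (ZMod d) ℂ) (j k : ZMod d) :
    (M * (pauliX d)ᵀ) j k = M j (k - 1) := by
  rw [Matrix.mul_apply, Finset.sum_eq_single (k - 1)]
  · simp [pauliX, Matrix.transpose_apply]
  · intro b _ hb
    simp only [pauliX, Matrix.transpose_apply, Matrix.of_apply, mul_ite, mul_one, mul_zero]
    exact if_neg (fun h => hb (by rw [h]; ring))
  · intro h; exact absurd (Finset.mem_univ _) h

omit hω in
lemma XXt : pauliX d * (pauliX d)ᵀ = 1 := by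
  ext j k
  rw [mul_Xt, Matrix.one_apply]
  simp only [pauliX, Matrix.of_apply, sub_add_cancel]

/-- H * Z = X * H -/
lemma hHZ : qFourier d ω * pauliZ d ω = pauliX d * qFourier d ω := by
  ext j k
  rw [pauliZ, Matrix.mul_diagonal, X_mul]
  simp only [qFourier, Matrix.of_apply]
  rw [mul_assoc, epow hω]
  congr 2
  ring

/-- H * X = Zi * H -/
lemma hHX : qFourier d ω * pauliX d
    = Matrix.diagonal (fun k : ZMod d => ω ^ (-k : ZMod d).val) * qFourier d ω := by
  ext j k
  rw [mul_X, Matrix.diagonal_mul]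
  simp only [qFourier, Matrix.of_apply]
  rw [← mul_assoc, mul_comm (ω ^ (-j : ZMod d).val), mul_assoc, epow hω]
  congr 2
  ring

/-- Z * H = H * Xᵀ -/
lemma hZH : pauliZ d ω * qFourier d ω = qFourier d ω * (pauliX d)ᵀ := by
  ext j k
  rw [pauliZ, Matrix.diagonal_mul, mul_Xt]
  simp only [qFourier, Matrix.of_apply]
  rw [← mul_assoc, mul_comm (ω ^ (j : ZMod d).val), mul_assoc, epow hω]
  congr 2
  ring

/-- P * X = X * (Z * P) -/
lemma hPX (hd : Nat.Prime d) (hodd : Odd d) :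
    phaseGate d ω * pauliX d = pauliX d * (pauliZ d ω * phaseGate d ω) := by
  haveI := Fact.mk hd
  have h2 : (2 : ZMod d) ≠ 0 := by
    intro h
    have h' : ((2 : ℕ) : ZMod d) = 0 := by exact_mod_cast h
    have hdvd := (ZMod.natCast_eq_zero_iff 2 d).mp h'
    have hd2 : d = 2 := (Nat.prime_dvd_prime_iff_eq hd Nat.prime_two).mp hdvd
    rw [hd2] at hodd
    exact (by norm_num : ¬ Odd 2) hodd
  ext j k
  rw [phaseGate, pauliZ, Matrix.diagonal_mul_diagonal, Matrix.diagonal_mul, X_mul]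
  by_cases hjk : j = k + 1
  · subst hjk
    have hk1 : k + 1 - 1 = k := by ring
    rw [hk1, Matrix.diagonal_apply_eq, show pauliX d (k + 1) k = 1 from by simp [pauliX],
      mul_one, epow hω]
    congr 1
    have hkey : (2 : ZMod d)⁻¹ * (k + 1) * k = k + (2 : ZMod d)⁻¹ * k * (k - 1) := by
      field_simp
      ring
    rw [hkey]
  · rw [show pauliX d j k = 0 from by simp [pauliX, hjk], mul_zero,
      Matrix.diagonal_apply_ne _ (fun h => hjk (by rw [← h]; ring))]

/-- Hᴴ * H = 1 -/
lemma hHunit (hd : Nat.Prime d) : (qFourier d ω)ᴴ * qFourier d ω = 1 := by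
  have hc2 : ((((d : ℝ) ^ (-(1 : ℝ) / 2) : ℝ) : ℂ)) * ((((d : ℝ) ^ (-(1 : ℝ) / 2) : ℝ) : ℂ))
      * (d : ℂ) = 1 := by
    have hd0 : (0 : ℝ) < (d : ℝ) := by
      exact_mod_cast Nat.pos_of_ne_zero (NeZero.ne d)
    have h1 : ((d : ℝ) ^ (-(1 : ℝ) / 2)) * ((d : ℝ) ^ (-(1 : ℝ) / 2)) = (d : ℝ)⁻¹ := by
      rw [← Real.rpow_add hd0, ← Real.rpow_neg_one (d : ℝ)]
      norm_num
    have hr : ((d : ℝ) ^ (-(1 : ℝ) / 2)) * ((d : ℝ) ^ (-(1 : ℝ) / 2)) * (d : ℝ) = 1 := by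
      rw [h1]; field_simp
    have hc := congrArg (fun x : ℝ => (x : ℂ)) hr
    push_cast at hc
    exact hc
  ext j k
  rw [Matrix.mul_apply, Matrix.one_apply]
  have hterm : ∀ b : ZMod d, (qFourier d ω)ᴴ j b * qFourier d ω b k
      = ((((d : ℝ) ^ (-(1 : ℝ) / 2) : ℝ) : ℂ)) * ((((d : ℝ) ^ (-(1 : ℝ) / 2) : ℝ) : ℂ))
        * ω ^ (b * (j - k)).val := by
    intro b
    simp only [qFourier, Matrix.conjTranspose_apply, Matrix.of_apply, star_mul',
      Complex.star_def, Complex.conj_ofReal, econj hω, neg_neg]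
    rw [mul_mul_mul_comm, epow hω]
    congr 2
    ring
  simp only [hterm]
  rw [← Finset.mul_sum, esum hω hd]
  by_cases hjk : j = k
  · rw [if_pos (sub_eq_zero.mpr hjk), if_pos hjk]; exact hc2
  · rw [if_neg (fun h => hjk (sub_eq_zero.mp h)), if_neg hjk, mul_zero]

/-- H * Hᴴ = 1 -/
lemma hHunit' (hd : Nat.Prime d) : qFourier d ω * (qFourier d ω)ᴴ = 1 := by
  have hc2 : ((((d : ℝ) ^ (-(1 : ℝ) / 2) : ℝ) : ℂ)) * ((((d : ℝ) ^ (-(1 : ℝ) / 2) : ℝ) : ℂ))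
      * (d : ℂ) = 1 := by
    have hd0 : (0 : ℝ) < (d : ℝ) := by
      exact_mod_cast Nat.pos_of_ne_zero (NeZero.ne d)
    have h1 : ((d : ℝ) ^ (-(1 : ℝ) / 2)) * ((d : ℝ) ^ (-(1 : ℝ) / 2)) = (d : ℝ)⁻¹ := by
      rw [← Real.rpow_add hd0, ← Real.rpow_neg_one (d : ℝ)]
      norm_num
    have hr : ((d : ℝ) ^ (-(1 : ℝ) / 2)) * ((d : ℝ) ^ (-(1 : ℝ) / 2)) * (d : ℝ) = 1 := by
      rw [h1]; field_simp
    have hc := congrArg (fun x : ℝ => (x : ℂ)) hr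
    push_cast at hc
    exact hc
  ext j k
  rw [Matrix.mul_apply, Matrix.one_apply]
  have hterm : ∀ b : ZMod d, qFourier d ω j b * (qFourier d ω)ᴴ b k
      = ((((d : ℝ) ^ (-(1 : ℝ) / 2) : ℝ) : ℂ)) * ((((d : ℝ) ^ (-(1 : ℝ) / 2) : ℝ) : ℂ))
        * ω ^ (b * (k - j)).val := by
    intro b
    simp only [qFourier, Matrix.conjTranspose_apply, Matrix.of_apply, star_mul',
      Complex.star_def, Complex.conj_ofReal, econj hω, neg_neg]
    rw [mul_mul_mul_comm, epow hω]
    congr 2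
    ring
  simp only [hterm]
  rw [← Finset.mul_sum, esum hω hd]
  by_cases hjk : j = k
  · rw [if_pos (sub_eq_zero.mpr hjk.symm), if_pos hjk]; exact hc2
  · rw [if_neg (fun h => hjk (sub_eq_zero.mp h).symm), if_neg hjk, mul_zero]

/-- P * Pᴴ = 1 -/
lemma hPunit : phaseGate d ω * (phaseGate d ω)ᴴ = 1 := by
  ext j k
  rw [phaseGate, Matrix.diagonal_conjTranspose, Matrix.diagonal_mul_diagonal]
  by_cases h : j = k
  · subst h
    rw [Matrix.diagonal_apply_eq, Matrix.one_apply_eq]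
    simp only [Pi.star_apply, Complex.star_def, econj hω]
    exact emul_neg hω _
  · rw [Matrix.diagonal_apply_ne _ h, Matrix.one_apply_ne h]

omit hω in
lemma diag_comm (f g : ZMod d → ℂ) :
    Matrix.diagonal f * Matrix.diagonal g = Matrix.diagonal g * Matrix.diagonal f := by
  rw [Matrix.diagonal_mul_diagonal, Matrix.diagonal_mul_diagonal]
  exact congrArg Matrix.diagonal (funext fun i => mul_comm (f i) (g i))

end aux

/-- `P̃ = Hᴴ·P·H` maps generalized Pauli operators to generalized Pauli operators under
conjugation, hence is a generalized Clifford operation. -/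
theorem phaseGateTilde_conj
    (d : ℕ) (hd : Nat.Prime d) (hodd : Odd d) [NeZero d] (ω : ℂ)
    (hω : IsPrimitiveRoot ω d)
    (Pt : Matrix (ZMod d) (ZMod d) ℂ)
    (hPt : Pt = (qFourier d ω)ᴴ * phaseGate d ω * qFourier d ω) :
    Pt * pauliX d * Ptᴴ = pauliX d ∧
      Pt * pauliZ d ω * Ptᴴ = pauliZ d ω * (pauliX d)⁻¹ := by
  have hPtH : Ptᴴ = (qFourier d ω)ᴴ * (phaseGate d ω)ᴴ * qFourier d ω := by
    rw [hPt]
    simp [Matrix.conjTranspose_mul, Matrix.mul_assoc]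
  have hHHM : ∀ M : Matrix (ZMod d) (ZMod d) ℂ,
      qFourier d ω * ((qFourier d ω)ᴴ * M) = M := fun M => by
    rw [← Matrix.mul_assoc, hHunit' hω hd, Matrix.one_mul]
  have hHHM' : ∀ M : Matrix (ZMod d) (ZMod d) ℂ,
      (qFourier d ω)ᴴ * (qFourier d ω * M) = M := fun M => by
    rw [← Matrix.mul_assoc, hHunit hω hd, Matrix.one_mul]
  have hPPM : ∀ M : Matrix (ZMod d) (ZMod d) ℂ,
      phaseGate d ω * ((phaseGate d ω)ᴴ * M) = M := fun M => by
    rw [← Matrix.mul_assoc, hPunit hω, Matrix.one_mul]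
  have hA2M : ∀ M : Matrix (ZMod d) (ZMod d) ℂ,
      qFourier d ω * (pauliX d * M)
        = Matrix.diagonal (fun k : ZMod d => ω ^ (-k : ZMod d).val)
            * (qFourier d ω * M) := fun M => by
    rw [← Matrix.mul_assoc, hHX hω, Matrix.mul_assoc]
  have hAM : ∀ M : Matrix (ZMod d) (ZMod d) ℂ,
      qFourier d ω * (pauliZ d ω * M) = pauliX d * (qFourier d ω * M) := fun M => by
    rw [← Matrix.mul_assoc, hHZ hω, Matrix.mul_assoc]
  have hCM : ∀ M : Matrix (ZMod d) (ZMod d) ℂ,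
      phaseGate d ω * (pauliX d * M)
        = pauliX d * (pauliZ d ω * (phaseGate d ω * M)) := fun M => by
    rw [← Matrix.mul_assoc, hPX hω hd hodd, Matrix.mul_assoc, Matrix.mul_assoc]
  have hPZiM : ∀ M : Matrix (ZMod d) (ZMod d) ℂ,
      phaseGate d ω * (Matrix.diagonal (fun k : ZMod d => ω ^ (-k : ZMod d).val) * M)
        = Matrix.diagonal (fun k : ZMod d => ω ^ (-k : ZMod d).val)
            * (phaseGate d ω * M) := fun M => by
    rw [← Matrix.mul_assoc, ← Matrix.mul_assoc, phaseGate, diag_comm]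
  have hXinv : (pauliX d)⁻¹ = (pauliX d)ᵀ := Matrix.inv_eq_right_inv XXt
  constructor
  · rw [hPtH, hPt]
    simp only [Matrix.mul_assoc]
    rw [hA2M, hHHM, hPZiM, hPPM, ← hHX hω, hHHM']
  · rw [hPtH, hPt]
    simp only [Matrix.mul_assoc]
    rw [hAM, hHHM, hCM, hPPM, hZH hω, ← Matrix.mul_assoc (pauliX d), ← hHZ hω,
      Matrix.mul_assoc, hHHM', hXinv]
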